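/- arXiv:2512.22053 — 5 statements merged into one kernel-verified Lean document; each statement's English description precedes it below -/
import Mathlib

section
/- Let A(t) be an n×n real matrix function of class C¹ on [a,b] with det A(t) ≠ 0 for t ∈ (a,b). Suppose det A(a) = det A(b) = 0 and there exist nonzero reals h_a, h_b and positive integers ν_a, ν_b such that det A(a+t) = h_a |t|^{ν_a} + o(|t|^{ν_a}) and det A(b+t) = h_b |t|^{ν_b} + o(|t|^{ν_b}) as |t| → 0 (within the domain). Let ν = max(ν_a, ν_b) and fix α > 0, γ > 0, κ > 0. Then there exists λ > 0, depending only on A, α, γ and κ, such that for every continuous ℝⁿ-valued function r on [a,b] satisfying ‖r‖_{i,a,b} ≥ α‖r‖_{a,b}, |A(t)r(t)| ≤ κ(t−a)^ν ‖r‖_{a,b} for t ∈ [a, a+γ), and |A(t)r(t)| ≤ κ(b−t)^ν ‖r‖_{a,b} for t ∈ (b−γ, b], one has ‖Ar‖_{i,a,b} ≥ λ‖r‖_{i,a,b}. -/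
open Set Filter Asymptotics Topology MeasureTheory

/-- Euclidean norm of a vector in `ℝⁿ`. -/
noncomputable def euclNorm {n : ℕ} (v : Fin n → ℝ) : ℝ := Real.sqrt (∑ i, v i ^ 2)

/-- `‖q‖_{a,b} = max_{t ∈ [a,b]} |q(t)|`. -/
noncomputable def supNorm {n : ℕ} (a b : ℝ) (q : ℝ → Fin n → ℝ) : ℝ :=
  sSup ((fun t => euclNorm (q t)) '' Set.Icc a b)

/-- `‖q‖_{i,a,b} = ∫_a^b |q(t)| dt`. -/
noncomputable def intNorm {n : ℕ} (a b : ℝ) (q : ℝ → Fin n → ℝ) : ℝ :=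
  ∫ t in a..b, euclNorm (q t)

lemma euclNorm_nonneg {n : ℕ} (v : Fin n → ℝ) : 0 ≤ euclNorm v := Real.sqrt_nonneg _

lemma continuous_euclNorm {n : ℕ} : Continuous (euclNorm (n := n)) :=
  Real.continuous_sqrt.comp (continuous_finset_sum _ fun i _ => (continuous_apply i).pow 2)

/-- Frobenius bound for `mulVec`. -/
lemma euclNorm_mulVec_le {n : ℕ} (M : Matrix (Fin n) (Fin n) ℝ) (v : Fin n → ℝ) :
    euclNorm (M.mulVec v) ≤ Real.sqrt (∑ i, ∑ j, M i j ^ 2) * euclNorm v := by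
  unfold euclNorm
  rw [← Real.sqrt_mul (by positivity)]
  apply Real.sqrt_le_sqrt
  rw [Finset.sum_mul]
  refine Finset.sum_le_sum fun i _ => ?_
  have h0 : M.mulVec v i = ∑ j, M i j * v j := by
    simp [Matrix.mulVec, dotProduct]
  rw [h0]
  exact Finset.sum_mul_sq_le_sq_mul_sq _ _ _

theorem stmt2 (n : ℕ) (a b : ℝ) (hab : a < b)
    (A : ℝ → Matrix (Fin n) (Fin n) ℝ)
    (hA : ∀ i j, ContDiffOn ℝ 1 (fun t => A t i j) (Set.Icc a b))
    (hdet : ∀ t ∈ Set.Ioo a b, (A t).det ≠ 0)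
    (hdeta : (A a).det = 0) (hdetb : (A b).det = 0)
    (ha hb : ℝ) (hha : ha ≠ 0) (hhb : hb ≠ 0)
    (νa νb : ℕ) (hνa : 0 < νa) (hνb : 0 < νb)
    (hasyma : (fun t => (A (a + t)).det - ha * |t| ^ νa) =o[𝓝[>] (0 : ℝ)] fun t => |t| ^ νa)
    (hasymb : (fun t => (A (b + t)).det - hb * |t| ^ νb) =o[𝓝[<] (0 : ℝ)] fun t => |t| ^ νb)
    (α γ κ : ℝ) (hα : 0 < α) (hγ : 0 < γ) (hκ : 0 < κ) :
    ∃ lam > 0, ∀ r : ℝ → Fin n → ℝ, ContinuousOn r (Set.Icc a b) →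
      intNorm a b r ≥ α * supNorm a b r →
      (∀ t, a ≤ t → t < a + γ → t ≤ b →
        euclNorm ((A t).mulVec (r t)) ≤ κ * (t - a) ^ max νa νb * supNorm a b r) →
      (∀ t, b - γ < t → t ≤ b → a ≤ t →
        euclNorm ((A t).mulVec (r t)) ≤ κ * (b - t) ^ max νa νb * supNorm a b r) →
      (∫ t in a..b, euclNorm ((A t).mulVec (r t))) ≥ lam * intNorm a b r := by
  classical
  -- choice of δ
  set δ : ℝ := min (α / 4) ((b - a) / 4) with hδdef
  have hδpos : 0 < δ := lt_min (by positivity) (by linarith)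
  have hδα : δ ≤ α / 4 := min_le_left _ _
  have hδba : δ ≤ (b - a) / 4 := min_le_right _ _
  have hadb : a + δ ≤ b - δ := by linarith
  have hKsub : Set.Icc (a + δ) (b - δ) ⊆ Set.Ioo a b := fun t ht =>
    ⟨by linarith [ht.1], by linarith [ht.2]⟩
  have hKsub' : Set.Icc (a + δ) (b - δ) ⊆ Set.Icc a b := fun t ht =>
    ⟨by linarith [ht.1], by linarith [ht.2]⟩
  have hKne : (Set.Icc (a + δ) (b - δ)).Nonempty := Set.nonempty_Icc.2 hadb
  -- continuity of A
  have hAij : ∀ i j, ContinuousOn (fun t => A t i j) (Set.Icc a b) := fun i j =>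
    (hA i j).continuousOn
  have hAcont : ContinuousOn (fun t => A t) (Set.Icc a b) := by
    apply continuousOn_pi.2; intro i; apply continuousOn_pi.2; intro j
    exact hAij i j
  have hdetcont : ContinuousOn (fun t => (A t).det) (Set.Icc a b) :=
    (continuous_id.matrix_det).comp_continuousOn hAcont
  have hadjcont : ContinuousOn (fun t => (A t).adjugate) (Set.Icc a b) :=
    (continuous_id.matrix_adjugate).comp_continuousOn hAcont
  -- the Frobenius norm of the inverse on the middle interval
  set F : ℝ → ℝ := fun t => Real.sqrt (∑ i, ∑ j, ((A t)⁻¹ i j) ^ 2) with hFdef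
  have hinvij : ∀ i j, ContinuousOn (fun t => (A t)⁻¹ i j) (Set.Icc (a + δ) (b - δ)) := by
    intro i j
    have h1 : ContinuousOn (fun t => ((A t).det)⁻¹) (Set.Icc (a + δ) (b - δ)) :=
      (hdetcont.mono hKsub').inv₀ fun t ht => hdet t (hKsub ht)
    have h2 : ContinuousOn (fun t => (A t).adjugate i j) (Set.Icc (a + δ) (b - δ)) := by
      have := (hadjcont.mono hKsub')
      exact ((continuous_apply j).comp (continuous_apply i)).comp_continuousOn this
    have heq : ∀ t, (A t)⁻¹ i j = ((A t).det)⁻¹ * (A t).adjugate i j := by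
      intro t
      rw [Matrix.inv_def]
      simp [Matrix.smul_apply, Ring.inverse_eq_inv', smul_eq_mul]
    simp only [heq]; exact h1.mul h2
  have hFcont : ContinuousOn F (Set.Icc (a + δ) (b - δ)) := by
    apply Real.continuous_sqrt.comp_continuousOn
    apply continuousOn_finset_sum; intro i _
    apply continuousOn_finset_sum; intro j _
    exact (hinvij i j).pow 2
  obtain ⟨t₀, ht₀, hFmax⟩ := isCompact_Icc.exists_isMaxOn hKne hFcont
  set C : ℝ := max (F t₀) 1 with hCdef
  have hC1 : (1 : ℝ) ≤ C := le_max_right _ _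
  have hCpos : 0 < C := lt_of_lt_of_le one_pos hC1
  -- key pointwise inequality on the middle interval
  have hkey : ∀ (r : ℝ → Fin n → ℝ) (t : ℝ), t ∈ Set.Icc (a + δ) (b - δ) →
      euclNorm (r t) ≤ C * euclNorm ((A t).mulVec (r t)) := by
    intro r t ht
    have hdt : IsUnit (A t).det := isUnit_iff_ne_zero.2 (hdet t (hKsub ht))
    have hinv : (A t)⁻¹.mulVec ((A t).mulVec (r t)) = r t := by
      rw [Matrix.mulVec_mulVec, Matrix.nonsing_inv_mul _ hdt, Matrix.one_mulVec]
    calc euclNorm (r t) = euclNorm ((A t)⁻¹.mulVec ((A t).mulVec (r t))) := by rw [hinv]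
      _ ≤ F t * euclNorm ((A t).mulVec (r t)) := euclNorm_mulVec_le _ _
      _ ≤ C * euclNorm ((A t).mulVec (r t)) := by
          have hFt : F t ≤ C := le_trans (hFmax ht) (le_max_left _ _)
          exact mul_le_mul_of_nonneg_right hFt (euclNorm_nonneg _)
  refine ⟨1 / (2 * C), by positivity, ?_⟩
  intro r hr hri _ _
  set M : ℝ := supNorm a b r with hMdef
  set g : ℝ → ℝ := fun t => euclNorm (r t) with hgdef
  set h : ℝ → ℝ := fun t => euclNorm ((A t).mulVec (r t)) with hhdef
  have hgcont : ContinuousOn g (Set.Icc a b) := continuous_euclNorm.comp_continuousOn hr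
  have hmulVec : ContinuousOn (fun t => (A t).mulVec (r t)) (Set.Icc a b) := by
    apply continuousOn_pi.2; intro i
    have : (fun t => (A t).mulVec (r t) i) = fun t => ∑ j, A t i j * r t j := by
      funext t; simp [Matrix.mulVec, dotProduct]
    rw [this]
    apply continuousOn_finset_sum; intro j _
    exact (hAij i j).mul (((continuous_apply j).comp_continuousOn hr))
  have hhcont : ContinuousOn h (Set.Icc a b) := continuous_euclNorm.comp_continuousOn hmulVec
  -- bound by the sup norm
  have hMbound : ∀ t ∈ Set.Icc a b, g t ≤ M := by
    intro t ht
    have hbdd : BddAbove ((fun t => euclNorm (r t)) '' Set.Icc a b) :=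
      (isCompact_Icc.image_of_continuousOn hgcont).bddAbove
    exact le_csSup hbdd ⟨t, ht, rfl⟩
  have hM0 : 0 ≤ M :=
    le_trans (euclNorm_nonneg (r a)) (hMbound a ⟨le_refl a, le_of_lt hab⟩)
  -- integrability on subintervals
  have hgint : ∀ c d, a ≤ c → c ≤ d → d ≤ b → IntervalIntegrable g volume c d := by
    intro c d h1 h2 h3
    apply ContinuousOn.intervalIntegrable
    apply hgcont.mono
    rw [Set.uIcc_of_le h2]
    exact fun t ht => ⟨le_trans h1 ht.1, le_trans ht.2 h3⟩
  have hhint : ∀ c d, a ≤ c → c ≤ d → d ≤ b → IntervalIntegrable h volume c d := by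
    intro c d h1 h2 h3
    apply ContinuousOn.intervalIntegrable
    apply hhcont.mono
    rw [Set.uIcc_of_le h2]
    exact fun t ht => ⟨le_trans h1 ht.1, le_trans ht.2 h3⟩
  have hadlea : a ≤ a + δ := by linarith
  have hbdleb : b - δ ≤ b := by linarith
  -- splitting of the integral of g
  have hsplitg : ∫ t in a..b, g t =
      (∫ t in a..(a + δ), g t) + (∫ t in (a + δ)..(b - δ), g t) + (∫ t in (b - δ)..b, g t) := by
    rw [intervalIntegral.integral_add_adjacent_intervals
        (hgint a (a + δ) le_rfl hadlea (by linarith))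
        (hgint (a + δ) (b - δ) hadlea hadb hbdleb),
      intervalIntegral.integral_add_adjacent_intervals
        (hgint a (b - δ) le_rfl (by linarith) hbdleb)
        (hgint (b - δ) b (by linarith) hbdleb le_rfl)]
  have hsplith : ∫ t in a..b, h t =
      (∫ t in a..(a + δ), h t) + (∫ t in (a + δ)..(b - δ), h t) + (∫ t in (b - δ)..b, h t) := by
    rw [intervalIntegral.integral_add_adjacent_intervals
        (hhint a (a + δ) le_rfl hadlea (by linarith))
        (hhint (a + δ) (b - δ) hadlea hadb hbdleb),
      intervalIntegral.integral_add_adjacent_intervals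
        (hhint a (b - δ) le_rfl (by linarith) hbdleb)
        (hhint (b - δ) b (by linarith) hbdleb le_rfl)]
  -- end pieces of g are small
  have hend1 : ∫ t in a..(a + δ), g t ≤ δ * M := by
    have := intervalIntegral.integral_mono_on hadlea
      (hgint a (a + δ) le_rfl hadlea (by linarith))
      (intervalIntegrable_const)
      (fun t ht => hMbound t ⟨ht.1, by linarith [ht.2]⟩)
    have h2 : ∫ t in a..(a + δ), (M : ℝ) = δ * M := by
      rw [intervalIntegral.integral_const, smul_eq_mul]; ring
    linarith [this]
  have hend2 : ∫ t in (b - δ)..b, g t ≤ δ * M := by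
    have := intervalIntegral.integral_mono_on hbdleb
      (hgint (b - δ) b (by linarith) hbdleb le_rfl)
      (intervalIntegrable_const)
      (fun t ht => hMbound t ⟨by linarith [ht.1], ht.2⟩)
    have h2 : ∫ t in (b - δ)..b, (M : ℝ) = δ * M := by
      rw [intervalIntegral.integral_const, smul_eq_mul]; ring
    linarith [this]
  -- end pieces of h are nonnegative
  have hend3 : 0 ≤ ∫ t in a..(a + δ), h t :=
    intervalIntegral.integral_nonneg hadlea (fun t _ => euclNorm_nonneg _)
  have hend4 : 0 ≤ ∫ t in (b - δ)..b, h t :=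
    intervalIntegral.integral_nonneg hbdleb (fun t _ => euclNorm_nonneg _)
  -- middle comparison
  have hmid : ∫ t in (a + δ)..(b - δ), g t ≤ C * ∫ t in (a + δ)..(b - δ), h t := by
    rw [← intervalIntegral.integral_const_mul]
    exact intervalIntegral.integral_mono_on hadb
      (hgint (a + δ) (b - δ) hadlea hadb hbdleb)
      ((hhint (a + δ) (b - δ) hadlea hadb hbdleb).const_mul C)
      (fun t ht => hkey r t ht)
  -- put everything together
  have hI : intNorm a b r = ∫ t in a..b, g t := rfl
  have hIM : α * M ≤ ∫ t in a..b, g t := hri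
  have hδM : 2 * (δ * M) ≤ (∫ t in a..b, g t) / 2 := by
    have h1 : δ * M ≤ (α / 4) * M := mul_le_mul_of_nonneg_right hδα hM0
    nlinarith
  have hmidg : (∫ t in a..b, g t) / 2 ≤ ∫ t in (a + δ)..(b - δ), g t := by
    rw [hsplitg] at *
    linarith
  have hintg0 : 0 ≤ ∫ t in a..b, g t :=
    intervalIntegral.integral_nonneg (le_of_lt hab) (fun t _ => euclNorm_nonneg _)
  have hfinal : (∫ t in a..b, g t) / (2 * C) ≤ ∫ t in a..b, h t := by
    have h1 : (∫ t in a..b, g t) / 2 ≤ C * ∫ t in (a + δ)..(b - δ), h t :=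
      le_trans hmidg hmid
    have h2 : ∫ t in (a + δ)..(b - δ), h t ≤ ∫ t in a..b, h t := by
      rw [hsplith]; linarith
    have h3 : (∫ t in a..b, g t) / 2 ≤ C * ∫ t in a..b, h t :=
      le_trans h1 (mul_le_mul_of_nonneg_left h2 (le_of_lt hCpos))
    rw [div_le_iff₀ (by positivity)]
    calc ∫ t in a..b, g t = 2 * ((∫ t in a..b, g t) / 2) := by ring
      _ ≤ 2 * (C * ∫ t in a..b, h t) := by linarith
      _ = (∫ t in a..b, h t) * (2 * C) := by ring
  have : (1 / (2 * C)) * intNorm a b r = (∫ t in a..b, g t) / (2 * C) := by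
    rw [hI]; ring
  rw [ge_iff_le, this]
  exact hfinal
end

section
/- Let A(t) be an n×n real matrix function of class C¹ on [a,b] with det A(t) ≠ 0 for t ∈ (a,b). Suppose det A(a) ≠ 0, det A(b) = 0, and there exist a nonzero real h_b and a positive integer ν_b such that det A(b+t) = h_b |t|^{ν_b} + o(|t|^{ν_b}) as t → 0−. Fix α > 0, γ > 0, κ > 0. Then there exists λ > 0, depending only on A, α, γ and κ, such that for every continuous ℝⁿ-valued function r on [a,b] satisfying ‖r‖_{i,a,b} ≥ α‖r‖_{a,b} and |A(t)r(t)| ≤ κ(b−t)^{ν_b} ‖r‖_{a,b} for t ∈ (b−γ, b], one has ‖Ar‖_{i,a,b} ≥ λ‖r‖_{i,a,b}. -/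
open Set Filter Asymptotics Topology MeasureTheory

lemma norm_le_euclNorm {n : ℕ} (v : Fin n → ℝ) : ‖v‖ ≤ euclNorm v := by
  rw [pi_norm_le_iff_of_nonneg (euclNorm_nonneg v)]
  intro i
  rw [Real.norm_eq_abs, ← Real.sqrt_sq_eq_abs]
  exact Real.sqrt_le_sqrt (Finset.single_le_sum (fun j _ => sq_nonneg (v j)) (Finset.mem_univ i))

lemma euclNorm_le_sqrt_mul_norm {n : ℕ} (v : Fin n → ℝ) :
    euclNorm v ≤ Real.sqrt n * ‖v‖ := by
  unfold euclNorm
  have h1 : (∑ i, v i ^ 2) ≤ (n : ℝ) * ‖v‖ ^ 2 := by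
    calc (∑ i, v i ^ 2) ≤ ∑ _i : Fin n, ‖v‖ ^ 2 := by
          refine Finset.sum_le_sum fun i _ => ?_
          have h := norm_le_pi_norm v i
          rw [Real.norm_eq_abs] at h
          calc v i ^ 2 = |v i| ^ 2 := (sq_abs _).symm
            _ ≤ ‖v‖ ^ 2 := pow_le_pow_left₀ (abs_nonneg _) h 2
      _ = (n : ℝ) * ‖v‖ ^ 2 := by
          rw [Finset.sum_const, Finset.card_univ, Fintype.card_fin, nsmul_eq_mul]
  calc Real.sqrt (∑ i, v i ^ 2) ≤ Real.sqrt ((n : ℝ) * ‖v‖ ^ 2) := Real.sqrt_le_sqrt h1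
    _ = Real.sqrt n * ‖v‖ := by
        rw [Real.sqrt_mul (Nat.cast_nonneg n), Real.sqrt_sq (norm_nonneg v)]

lemma mulVec_norm_le {n : ℕ} (M : Matrix (Fin n) (Fin n) ℝ) (v : Fin n → ℝ) :
    ‖M.mulVec v‖ ≤ (∑ i, ∑ j, |M i j|) * ‖v‖ := by
  have hS : 0 ≤ ∑ i, ∑ j, |M i j| :=
    Finset.sum_nonneg fun i _ => Finset.sum_nonneg fun j _ => abs_nonneg _
  rw [pi_norm_le_iff_of_nonneg (mul_nonneg hS (norm_nonneg v))]
  intro i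
  have hmv : M.mulVec v i = ∑ j, M i j * v j := rfl
  rw [hmv, Real.norm_eq_abs]
  calc |∑ j, M i j * v j| ≤ ∑ j, |M i j * v j| := Finset.abs_sum_le_sum_abs _ _
    _ = ∑ j, |M i j| * |v j| := by simp [abs_mul]
    _ ≤ ∑ j, |M i j| * ‖v‖ := by
        refine Finset.sum_le_sum fun j _ => ?_
        have h := norm_le_pi_norm v j
        rw [Real.norm_eq_abs] at h
        exact mul_le_mul_of_nonneg_left h (abs_nonneg _)
    _ = (∑ j, |M i j|) * ‖v‖ := by rw [Finset.sum_mul]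
    _ ≤ (∑ i, ∑ j, |M i j|) * ‖v‖ :=
        mul_le_mul_of_nonneg_right
          (Finset.single_le_sum (f := fun k => ∑ j, |M k j|)
            (fun k _ => Finset.sum_nonneg fun j _ => abs_nonneg _)
            (Finset.mem_univ i)) (norm_nonneg v)

theorem stmt3 (n : ℕ) (a b : ℝ) (hab : a < b)
    (A : ℝ → Matrix (Fin n) (Fin n) ℝ)
    (hA : ∀ i j, ContDiffOn ℝ 1 (fun t => A t i j) (Set.Icc a b))
    (hdet : ∀ t ∈ Set.Ioo a b, (A t).det ≠ 0)
    (hdeta : (A a).det ≠ 0) (hdetb : (A b).det = 0)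
    (hb : ℝ) (hhb : hb ≠ 0) (νb : ℕ) (hνb : 0 < νb)
    (hasymb : (fun t => (A (b + t)).det - hb * |t| ^ νb) =o[𝓝[<] (0 : ℝ)] fun t => |t| ^ νb)
    (α γ κ : ℝ) (hα : 0 < α) (hγ : 0 < γ) (hκ : 0 < κ) :
    ∃ lam > 0, ∀ r : ℝ → Fin n → ℝ, ContinuousOn r (Set.Icc a b) →
      intNorm a b r ≥ α * supNorm a b r →
      (∀ t, b - γ < t → t ≤ b → a ≤ t →
        euclNorm ((A t).mulVec (r t)) ≤ κ * (b - t) ^ νb * supNorm a b r) →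
      (∫ t in a..b, euclNorm ((A t).mulVec (r t))) ≥ lam * intNorm a b r := by
  have hAc : ContinuousOn A (Set.Icc a b) :=
    continuousOn_pi.2 fun i => continuousOn_pi.2 fun j => (hA i j).continuousOn
  set δ : ℝ := min (α / 2) ((b - a) / 2) with hδdef
  have hδpos : 0 < δ := lt_min (by linarith) (by linarith)
  have hδle : δ ≤ α / 2 := min_le_left _ _
  have hδle2 : δ ≤ (b - a) / 2 := min_le_right _ _
  set b' : ℝ := b - δ with hb'def
  have hab' : a < b' := by rw [hb'def]; linarith
  have hb'b : b' < b := by rw [hb'def]; linarith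
  have hKsub : Set.Icc a b' ⊆ Set.Icc a b := Set.Icc_subset_Icc le_rfl hb'b.le
  have hdetK : ∀ t ∈ Set.Icc a b', (A t).det ≠ 0 := by
    intro t ht
    rcases eq_or_lt_of_le ht.1 with h | h
    · rw [← h]; exact hdeta
    · exact hdet t ⟨h, lt_of_le_of_lt ht.2 hb'b⟩
  -- the inverse matrix, written explicitly
  set g : ℝ → Matrix (Fin n) (Fin n) ℝ := fun t => ((A t).det)⁻¹ • (A t).adjugate with hgdef
  have hgeq : ∀ t, g t = (A t)⁻¹ := by
    intro t
    rw [hgdef, Matrix.inv_def, Ring.inverse_eq_inv']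
  have hginv : ∀ t ∈ Set.Icc a b', ∀ v : Fin n → ℝ,
      (g t).mulVec ((A t).mulVec v) = v := by
    intro t ht v
    rw [hgeq, Matrix.mulVec_mulVec,
      Matrix.nonsing_inv_mul _ (isUnit_iff_ne_zero.2 (hdetK t ht)), Matrix.one_mulVec]
  -- continuity of the entries of g on [a, b']
  have hdetc : ContinuousOn (fun t => (A t).det) (Set.Icc a b') :=
    (Continuous.matrix_det continuous_id).comp_continuousOn (hAc.mono hKsub)
  have hadjc : ContinuousOn (fun t => (A t).adjugate) (Set.Icc a b') :=
    (Continuous.matrix_adjugate continuous_id).comp_continuousOn (hAc.mono hKsub)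
  have hinvc : ContinuousOn (fun t => ((A t).det)⁻¹) (Set.Icc a b') :=
    hdetc.inv₀ hdetK
  set Sfun : ℝ → ℝ := fun t => ∑ i, ∑ j, |g t i j| with hSfundef
  have hSfc : ContinuousOn Sfun (Set.Icc a b') := by
    apply continuousOn_finset_sum
    intro i _
    apply continuousOn_finset_sum
    intro j _
    have hentry : ContinuousOn (fun t => g t i j) (Set.Icc a b') := by
      have : (fun t => g t i j) = fun t => ((A t).det)⁻¹ * (A t).adjugate i j := by
        funext t; simp [hgdef, Matrix.smul_apply, smul_eq_mul]
      rw [this]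
      exact hinvc.mul ((continuous_apply j).comp_continuousOn
        ((continuous_apply i).comp_continuousOn hadjc))
    exact hentry.abs
  have hSfnn : ∀ t, 0 ≤ Sfun t := fun t =>
    Finset.sum_nonneg fun i _ => Finset.sum_nonneg fun j _ => abs_nonneg _
  obtain ⟨t0, ht0, hmax⟩ :=
    isCompact_Icc.exists_isMaxOn (Set.nonempty_Icc.2 hab'.le) hSfc
  set C : ℝ := Sfun t0 with hCdef
  have hC0 : 0 ≤ C := hSfnn t0
  have hCle : ∀ t ∈ Set.Icc a b', Sfun t ≤ C := fun t ht => hmax ht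
  set D : ℝ := Real.sqrt n * C + 1 with hDdef
  have hD1 : 1 ≤ D := by
    have : 0 ≤ Real.sqrt n * C := mul_nonneg (Real.sqrt_nonneg _) hC0
    linarith
  have hDpos : 0 < D := lt_of_lt_of_le one_pos hD1
  -- key pointwise bound on [a, b']
  have hkey : ∀ r : ℝ → Fin n → ℝ, ∀ t ∈ Set.Icc a b',
      euclNorm (r t) ≤ D * euclNorm ((A t).mulVec (r t)) := by
    intro r t ht
    have h1 : euclNorm (r t) ≤ Real.sqrt n * ‖r t‖ := euclNorm_le_sqrt_mul_norm _
    have h2 : ‖r t‖ = ‖(g t).mulVec ((A t).mulVec (r t))‖ := by rw [hginv t ht]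
    have h3 : ‖(g t).mulVec ((A t).mulVec (r t))‖ ≤ Sfun t * ‖(A t).mulVec (r t)‖ :=
      mulVec_norm_le _ _
    have h4 : ‖(A t).mulVec (r t)‖ ≤ euclNorm ((A t).mulVec (r t)) := norm_le_euclNorm _
    have h5 : Sfun t * ‖(A t).mulVec (r t)‖ ≤ C * euclNorm ((A t).mulVec (r t)) :=
      mul_le_mul (hCle t ht) h4 (norm_nonneg _)
        hC0
    have hnn : 0 ≤ euclNorm ((A t).mulVec (r t)) := euclNorm_nonneg _
    have hsqrtnn : (0:ℝ) ≤ Real.sqrt n := Real.sqrt_nonneg _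
    calc euclNorm (r t) ≤ Real.sqrt n * ‖r t‖ := h1
      _ = Real.sqrt n * ‖(g t).mulVec ((A t).mulVec (r t))‖ := by rw [h2]
      _ ≤ Real.sqrt n * (C * euclNorm ((A t).mulVec (r t))) :=
          mul_le_mul_of_nonneg_left (le_trans h3 h5) hsqrtnn
      _ = (Real.sqrt n * C) * euclNorm ((A t).mulVec (r t)) := by ring
      _ ≤ D * euclNorm ((A t).mulVec (r t)) := by
          apply mul_le_mul_of_nonneg_right _ hnn
          rw [hDdef]; linarith
  refine ⟨1 / (2 * D), by positivity, ?_⟩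
  intro r hr hir _
  -- continuity facts for r
  have hrc : ContinuousOn (fun t => euclNorm (r t)) (Set.Icc a b) :=
    continuous_euclNorm.comp_continuousOn hr
  have hArvec : ContinuousOn (fun t => (A t).mulVec (r t)) (Set.Icc a b) := by
    apply continuousOn_pi.2
    intro i
    have : (fun t => (A t).mulVec (r t) i) = fun t => ∑ j, A t i j * r t j := rfl
    rw [this]
    exact continuousOn_finset_sum _ fun j _ =>
      ((hA i j).continuousOn.mul ((continuous_apply j).comp_continuousOn hr))
  have hArc : ContinuousOn (fun t => euclNorm ((A t).mulVec (r t))) (Set.Icc a b) :=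
    continuous_euclNorm.comp_continuousOn hArvec
  -- integrability
  have hsub1 : Set.uIcc a b' ⊆ Set.Icc a b := by
    rw [Set.uIcc_of_le hab'.le]; exact hKsub
  have hsub2 : Set.uIcc b' b ⊆ Set.Icc a b := by
    rw [Set.uIcc_of_le hb'b.le]; exact Set.Icc_subset_Icc hab'.le le_rfl
  have hsub3 : Set.uIcc a b ⊆ Set.Icc a b := by rw [Set.uIcc_of_le hab.le]
  have hir1 : IntervalIntegrable (fun t => euclNorm (r t)) volume a b' :=
    (hrc.mono hsub1).intervalIntegrable
  have hir2 : IntervalIntegrable (fun t => euclNorm (r t)) volume b' b :=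
    (hrc.mono hsub2).intervalIntegrable
  have hiAr1 : IntervalIntegrable (fun t => euclNorm ((A t).mulVec (r t))) volume a b' :=
    (hArc.mono hsub1).intervalIntegrable
  have hiAr2 : IntervalIntegrable (fun t => euclNorm ((A t).mulVec (r t))) volume b' b :=
    (hArc.mono hsub2).intervalIntegrable
  -- the sup norm
  have hSbdd : BddAbove ((fun t => euclNorm (r t)) '' Set.Icc a b) :=
    (isCompact_Icc.image_of_continuousOn hrc).bddAbove
  have hSle : ∀ t ∈ Set.Icc a b, euclNorm (r t) ≤ supNorm a b r := fun t ht =>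
    le_csSup hSbdd ⟨t, ht, rfl⟩
  have hS0 : 0 ≤ supNorm a b r :=
    le_trans (euclNorm_nonneg (r a)) (hSle a ⟨le_refl a, hab.le⟩)
  set S : ℝ := supNorm a b r with hSdef
  set I : ℝ := intNorm a b r with hIdef
  have hIsplit : I = (∫ t in a..b', euclNorm (r t)) + ∫ t in b'..b, euclNorm (r t) := by
    rw [hIdef, intNorm]
    exact (intervalIntegral.integral_add_adjacent_intervals hir1 hir2).symm
  -- tail bound
  have htail : (∫ t in b'..b, euclNorm (r t)) ≤ δ * S := by
    have hmono : (∫ t in b'..b, euclNorm (r t)) ≤ ∫ _t in b'..b, S := by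
      apply intervalIntegral.integral_mono_on hb'b.le hir2 intervalIntegrable_const
      intro t ht
      exact hSle t ⟨le_trans hab'.le ht.1, ht.2⟩
    have hconst : (∫ _t in b'..b, S) = δ * S := by
      rw [intervalIntegral.integral_const, smul_eq_mul, hb'def]; ring
    linarith
  have hαS : α * S ≤ I := hir
  have htail2 : (∫ t in b'..b, euclNorm (r t)) ≤ I / 2 := by
    have h1 : δ * S ≤ (α / 2) * S := mul_le_mul_of_nonneg_right hδle hS0
    linarith
  have hmain : I / 2 ≤ ∫ t in a..b', euclNorm (r t) := by linarith
  -- lower bound on main part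
  have hcomp : (∫ t in a..b', euclNorm (r t)) ≤
      D * ∫ t in a..b', euclNorm ((A t).mulVec (r t)) := by
    have : (∫ t in a..b', euclNorm (r t)) ≤
        ∫ t in a..b', D * euclNorm ((A t).mulVec (r t)) := by
      apply intervalIntegral.integral_mono_on hab'.le hir1 (hiAr1.const_mul D)
      intro t ht
      exact hkey r t ht
    rwa [intervalIntegral.integral_const_mul] at this
  have hJsplit : (∫ t in a..b, euclNorm ((A t).mulVec (r t))) =
      (∫ t in a..b', euclNorm ((A t).mulVec (r t))) +
        ∫ t in b'..b, euclNorm ((A t).mulVec (r t)) :=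
    (intervalIntegral.integral_add_adjacent_intervals hiAr1 hiAr2).symm
  have hJtail : 0 ≤ ∫ t in b'..b, euclNorm ((A t).mulVec (r t)) :=
    intervalIntegral.integral_nonneg hb'b.le fun t _ => euclNorm_nonneg _
  set X : ℝ := ∫ t in a..b', euclNorm ((A t).mulVec (r t)) with hXdef
  have hIX : I ≤ 2 * D * X := by nlinarith
  have hfinal : (1 / (2 * D)) * I ≤ X := by
    rw [div_mul_eq_mul_div, one_mul, div_le_iff₀ (by positivity)]
    linarith [hIX]
  have : (1 / (2 * D)) * I ≤ ∫ t in a..b, euclNorm ((A t).mulVec (r t)) := by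
    rw [hJsplit]; linarith
  exact this
end

section
/- Let A(t) be an n×n real matrix function of class C¹ on [a,b] with det A(t) ≠ 0 for t ∈ (a,b). Suppose det A(a) = 0, det A(b) ≠ 0, and there exist a nonzero real h_a and a positive integer ν_a such that det A(a+t) = h_a t^{ν_a} + o(t^{ν_a}) as t → 0+. Fix α > 0, γ > 0, κ > 0. Then there exists λ > 0, depending only on A, α, γ and κ, such that for every continuous ℝⁿ-valued function r on [a,b] satisfying ‖r‖_{i,a,b} ≥ α‖r‖_{a,b} and |A(t)r(t)| ≤ κ(t−a)^{ν_a} ‖r‖_{a,b} for t ∈ [a, a+γ), one has ‖Ar‖_{i,a,b} ≥ λ‖r‖_{i,a,b}. -/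
open Set Filter Asymptotics Topology MeasureTheory

lemma abs_le_euclNorm {n : ℕ} (v : Fin n → ℝ) (i : Fin n) : |v i| ≤ euclNorm v := by
  rw [← Real.sqrt_sq_eq_abs]
  exact Real.sqrt_le_sqrt (Finset.single_le_sum (fun j _ => sq_nonneg (v j)) (Finset.mem_univ i))

lemma euclNorm_mulVec_le_s4 {n : ℕ} (B : Matrix (Fin n) (Fin n) ℝ) (w : Fin n → ℝ) :
    euclNorm (B.mulVec w) ≤ Real.sqrt n * (∑ p, ∑ q, |B p q|) * euclNorm w := by
  set C : ℝ := (∑ p, ∑ q, |B p q|) * euclNorm w with hC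
  have hCnn : 0 ≤ C := mul_nonneg (Finset.sum_nonneg fun p _ =>
    Finset.sum_nonneg fun q _ => abs_nonneg _) (euclNorm_nonneg w)
  have hkey : ∀ i, |B.mulVec w i| ≤ C := by
    intro i
    calc |B.mulVec w i| = |∑ j, B i j * w j| := by rfl
      _ ≤ ∑ j, |B i j * w j| := Finset.abs_sum_le_sum_abs _ _
      _ = ∑ j, |B i j| * |w j| := by simp [abs_mul]
      _ ≤ ∑ j, |B i j| * euclNorm w := Finset.sum_le_sum fun j _ =>
          mul_le_mul_of_nonneg_left (abs_le_euclNorm w j) (abs_nonneg _)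
      _ = (∑ j, |B i j|) * euclNorm w := by rw [Finset.sum_mul]
      _ ≤ C := by
          refine mul_le_mul_of_nonneg_right ?_ (euclNorm_nonneg w)
          exact Finset.single_le_sum (f := fun p => ∑ q, |B p q|)
            (fun p _ => Finset.sum_nonneg fun q _ => abs_nonneg _) (Finset.mem_univ i)
  have : euclNorm (B.mulVec w) ≤ Real.sqrt (∑ _i : Fin n, C ^ 2) := by
    apply Real.sqrt_le_sqrt
    exact Finset.sum_le_sum fun i _ => by
      rw [← sq_abs]; exact pow_le_pow_left₀ (abs_nonneg _) (hkey i) 2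
  calc euclNorm (B.mulVec w) ≤ Real.sqrt (∑ _i : Fin n, C ^ 2) := this
    _ = Real.sqrt n * C := by
        rw [Finset.sum_const, Finset.card_univ, Fintype.card_fin, nsmul_eq_mul,
          Real.sqrt_mul (by positivity), Real.sqrt_sq hCnn]
    _ = Real.sqrt n * (∑ p, ∑ q, |B p q|) * euclNorm w := by rw [hC, mul_assoc]

theorem stmt4 (n : ℕ) (a b : ℝ) (hab : a < b)
    (A : ℝ → Matrix (Fin n) (Fin n) ℝ)
    (hA : ∀ i j, ContDiffOn ℝ 1 (fun t => A t i j) (Set.Icc a b))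
    (hdet : ∀ t ∈ Set.Ioo a b, (A t).det ≠ 0)
    (hdeta : (A a).det = 0) (hdetb : (A b).det ≠ 0)
    (ha : ℝ) (hha : ha ≠ 0) (νa : ℕ) (hνa : 0 < νa)
    (hasyma : (fun t => (A (a + t)).det - ha * t ^ νa) =o[𝓝[>] (0 : ℝ)] fun t => t ^ νa)
    (α γ κ : ℝ) (hα : 0 < α) (hγ : 0 < γ) (hκ : 0 < κ) :
    ∃ lam > 0, ∀ r : ℝ → Fin n → ℝ, ContinuousOn r (Set.Icc a b) →
      intNorm a b r ≥ α * supNorm a b r →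
      (∀ t, a ≤ t → t < a + γ → t ≤ b →
        euclNorm ((A t).mulVec (r t)) ≤ κ * (t - a) ^ νa * supNorm a b r) →
      (∫ t in a..b, euclNorm ((A t).mulVec (r t))) ≥ lam * intNorm a b r := by
  -- choose δ and the compact set K = Icc s b
  set δ : ℝ := min (α / 2) ((b - a) / 2) with hδdef
  have hδpos : 0 < δ := lt_min (by linarith) (by linarith)
  set s : ℝ := a + δ with hsdef
  have hsa : a < s := by simp [hsdef]; linarith
  have hsb : s < b := by
    have : δ ≤ (b - a) / 2 := min_le_right _ _
    simp only [hsdef]; linarith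
  have hKsub : Set.Icc s b ⊆ Set.Icc a b := Set.Icc_subset_Icc (le_of_lt hsa) le_rfl
  have hdetK : ∀ t ∈ Set.Icc s b, (A t).det ≠ 0 := by
    intro t ht
    rcases eq_or_lt_of_le ht.2 with h | h
    · rw [h]; exact hdetb
    · exact hdet t ⟨lt_of_lt_of_le hsa ht.1, h⟩
  -- continuity of A on Icc a b
  have hAc : ContinuousOn (fun t => A t) (Set.Icc a b) := by
    apply continuousOn_pi.mpr; intro i; apply continuousOn_pi.mpr; intro j
    exact (hA i j).continuousOn
  have hAcK : ContinuousOn (fun t => A t) (Set.Icc s b) := hAc.mono hKsub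
  -- the "inverse" matrix function on K
  set B : ℝ → Matrix (Fin n) (Fin n) ℝ := fun t => ((A t).det)⁻¹ • (A t).adjugate with hBdef
  have hBmul : ∀ t ∈ Set.Icc s b, ∀ v : Fin n → ℝ, (B t).mulVec ((A t).mulVec v) = v := by
    intro t ht v
    rw [hBdef, Matrix.mulVec_mulVec, Matrix.smul_mul, Matrix.adjugate_mul, smul_smul,
      inv_mul_cancel₀ (hdetK t ht), one_smul, Matrix.one_mulVec]
  -- sum of absolute values of entries of B, continuous on K
  set g : ℝ → ℝ := fun t => ∑ p, ∑ q, |B t p q| with hgdef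
  have hgc : ContinuousOn g (Set.Icc s b) := by
    apply continuousOn_finset_sum; intro p _
    apply continuousOn_finset_sum; intro q _
    apply ContinuousOn.abs
    have hdetc : ContinuousOn (fun t => (A t).det) (Set.Icc s b) :=
      (Continuous.matrix_det continuous_id).comp_continuousOn hAcK
    have hadjc : ContinuousOn (fun t => (A t).adjugate p q) (Set.Icc s b) := by
      have := (Continuous.matrix_adjugate continuous_id).comp_continuousOn hAcK
      exact ((continuous_apply q).comp (continuous_apply p)).comp_continuousOn this
    have : ContinuousOn (fun t => ((A t).det)⁻¹ * (A t).adjugate p q) (Set.Icc s b) :=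
      (hdetc.inv₀ hdetK).mul hadjc
    simpa [hBdef, Matrix.smul_apply, smul_eq_mul] using this
  -- bound g on the compact set K
  obtain ⟨t₀, ht₀, hM'⟩ := IsCompact.exists_isMaxOn isCompact_Icc
    (Set.nonempty_Icc.mpr (le_of_lt hsb)) hgc
  have hM : ∀ t ∈ Set.Icc s b, g t ≤ g t₀ := fun t ht => hM' ht
  set M : ℝ := g t₀ with hMdef
  have hMnn : 0 ≤ M := by
    refine le_trans ?_ (le_refl M)
    exact Finset.sum_nonneg fun p _ => Finset.sum_nonneg fun q _ => abs_nonneg _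
  set D : ℝ := Real.sqrt n * M + 1 with hDdef
  have hDpos : 0 < D := by positivity
  -- the key lower bound on K
  have hlow : ∀ t ∈ Set.Icc s b, ∀ v : Fin n → ℝ,
      euclNorm v / D ≤ euclNorm ((A t).mulVec v) := by
    intro t ht v
    have h1 : euclNorm v ≤ Real.sqrt n * g t * euclNorm ((A t).mulVec v) := by
      have := euclNorm_mulVec_le_s4 (B t) ((A t).mulVec v)
      rwa [hBmul t ht v] at this
    have h2 : Real.sqrt n * g t ≤ D := by
      have := hM t ht
      nlinarith [Real.sqrt_nonneg (n : ℝ), hMnn]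
    have h3 : euclNorm v ≤ D * euclNorm ((A t).mulVec v) :=
      h1.trans (mul_le_mul_of_nonneg_right h2 (euclNorm_nonneg _))
    rw [div_le_iff₀ hDpos]
    linarith [h3]
  refine ⟨D⁻¹ / 2, by positivity, ?_⟩
  intro r hr hint _hptw
  set G : ℝ → ℝ := fun t => euclNorm (r t) with hGdef
  set F : ℝ → ℝ := fun t => euclNorm ((A t).mulVec (r t)) with hFdef
  have hGc : ContinuousOn G (Set.Icc a b) := continuous_euclNorm.comp_continuousOn hr
  have hFc : ContinuousOn F (Set.Icc a b) := by
    apply continuous_euclNorm.comp_continuousOn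
    apply continuousOn_pi.mpr; intro i
    have : (fun t => (A t).mulVec (r t) i) = fun t => ∑ j, A t i j * r t j := rfl
    rw [this]
    apply continuousOn_finset_sum; intro j _
    exact ((hA i j).continuousOn).mul ((continuous_apply j).comp_continuousOn hr)
  have hGias : IntervalIntegrable G volume a s :=
    ContinuousOn.intervalIntegrable (by
      rw [Set.uIcc_of_le hsa.le]
      exact hGc.mono (Set.Icc_subset_Icc le_rfl (le_of_lt hsb)))
  have hGisb : IntervalIntegrable G volume s b :=
    ContinuousOn.intervalIntegrable (by
      rw [Set.uIcc_of_le hsb.le]; exact hGc.mono hKsub)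
  have hFias : IntervalIntegrable F volume a s :=
    ContinuousOn.intervalIntegrable (by
      rw [Set.uIcc_of_le hsa.le]
      exact hFc.mono (Set.Icc_subset_Icc le_rfl (le_of_lt hsb)))
  have hFisb : IntervalIntegrable F volume s b :=
    ContinuousOn.intervalIntegrable (by
      rw [Set.uIcc_of_le hsb.le]; exact hFc.mono hKsub)
  have hsupmem : ∀ t ∈ Set.Icc a b, G t ≤ supNorm a b r := by
    intro t ht
    apply le_csSup (isCompact_Icc.image_of_continuousOn hGc).bddAbove
    exact Set.mem_image_of_mem G ht
  have hsupnn : 0 ≤ supNorm a b r :=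
    le_trans (euclNorm_nonneg (r a)) (hsupmem a ⟨le_rfl, hab.le⟩)
  have hintdef : intNorm a b r = ∫ t in a..b, G t := rfl
  have h1 : ∫ t in a..s, G t ≤ δ * supNorm a b r := by
    have h := intervalIntegral.integral_mono_on hsa.le hGias intervalIntegrable_const
      (fun t ht => hsupmem t ⟨ht.1, ht.2.trans (le_of_lt hsb)⟩)
    have heq : ∫ _t in a..s, supNorm a b r = δ * supNorm a b r := by
      rw [intervalIntegral.integral_const, smul_eq_mul, hsdef]; ring_nf
    linarith [h, heq.ge]
  have hsplitG : (∫ t in a..s, G t) + (∫ t in s..b, G t) = ∫ t in a..b, G t :=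
    intervalIntegral.integral_add_adjacent_intervals hGias hGisb
  have hδα : δ ≤ α / 2 := min_le_left _ _
  have h3 : (∫ t in s..b, G t) ≥ intNorm a b r / 2 := by
    have hd : δ * supNorm a b r ≤ (α / 2) * supNorm a b r :=
      mul_le_mul_of_nonneg_right hδα hsupnn
    rw [hintdef] at hint ⊢
    linarith
  have h4 : (∫ t in s..b, F t) ≥ D⁻¹ * ∫ t in s..b, G t := by
    have hmono : ∀ t ∈ Set.Icc s b, D⁻¹ * G t ≤ F t := by
      intro t ht
      have := hlow t ht (r t)
      rwa [div_eq_inv_mul] at this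
    have h := intervalIntegral.integral_mono_on hsb.le (hGisb.const_mul D⁻¹) hFisb hmono
    rwa [intervalIntegral.integral_const_mul] at h
  have hsplitF : (∫ t in a..s, F t) + (∫ t in s..b, F t) = ∫ t in a..b, F t :=
    intervalIntegral.integral_add_adjacent_intervals hFias hFisb
  have hFas_nn : 0 ≤ ∫ t in a..s, F t :=
    intervalIntegral.integral_nonneg hsa.le fun t _ => euclNorm_nonneg _
  have hchain : D⁻¹ * (∫ t in s..b, G t) ≥ D⁻¹ * (intNorm a b r / 2) :=
    mul_le_mul_of_nonneg_left h3 (inv_nonneg.mpr hDpos.le)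
  calc (∫ t in a..b, F t) ≥ ∫ t in s..b, F t := by linarith
    _ ≥ D⁻¹ * (intNorm a b r / 2) := le_trans hchain h4
    _ = D⁻¹ / 2 * intNorm a b r := by ring
end

section
/- Let A(t) be an n×l real matrix function of class C¹ on an interval [0,δ] with l ≤ n, and set B(t) = A(t)ᵀA(t). Suppose there exists h > 0 such that det B(t) = h² t² + o(t²) as t → 0+. Then the zero eigenvalue of the positive semidefinite symmetric matrix B(0) is simple; equivalently, the kernel of B(0) (which equals the kernel of A(0)) is one-dimensional. -/
open Set Filter Asymptotics Topology Matrix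

-- helper: quadratic form of AᵀA
lemma quadId {n l : ℕ} (M : Matrix (Fin n) (Fin l) ℝ) (x : Fin l → ℝ) :
    x ⬝ᵥ ((Mᵀ * M) *ᵥ x) = (M *ᵥ x) ⬝ᵥ (M *ᵥ x) := by
  rw [← Matrix.mulVec_mulVec, Matrix.dotProduct_mulVec, Matrix.vecMul_transpose]

-- helper: entry bound gives quadratic form bound
lemma dotBound {n l : ℕ} (D : Matrix (Fin n) (Fin l) ℝ) (M : ℝ) (hM0 : 0 ≤ M)
    (hM : ∀ i j, |D i j| ≤ M) (x : Fin l → ℝ) :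
    (D *ᵥ x) ⬝ᵥ (D *ᵥ x) ≤ ((n : ℝ) * l * M ^ 2) * (x ⬝ᵥ x) := by
  have key : ∀ i : Fin n, ((D *ᵥ x) i) ^ 2 ≤ M ^ 2 * ((l : ℝ) * (x ⬝ᵥ x)) := by
    intro i
    have h1 : |(D *ᵥ x) i| ≤ M * ∑ j, |x j| := by
      calc |(D *ᵥ x) i| = |∑ j, D i j * x j| := by simp [Matrix.mulVec, dotProduct]
        _ ≤ ∑ j, |D i j * x j| := Finset.abs_sum_le_sum_abs _ _
        _ ≤ ∑ j, M * |x j| := by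
            refine Finset.sum_le_sum fun j _ => ?_
            rw [abs_mul]
            exact mul_le_mul_of_nonneg_right (hM i j) (abs_nonneg _)
        _ = M * ∑ j, |x j| := by rw [Finset.mul_sum]
    have h2 : ((D *ᵥ x) i) ^ 2 ≤ (M * ∑ j, |x j|) ^ 2 := by
      have := abs_nonneg ((D *ᵥ x) i)
      nlinarith [abs_nonneg ((D *ᵥ x) i), sq_abs ((D *ᵥ x) i)]
    have h3 : (∑ j, |x j|) ^ 2 ≤ (l : ℝ) * ∑ j, |x j| ^ 2 := by
      simpa using sq_sum_le_card_mul_sum_sq (s := Finset.univ) (f := fun j => |x j|)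
    have h4 : (∑ j, |x j| ^ 2) = x ⬝ᵥ x := by
      simp [dotProduct, sq_abs, sq]
    calc ((D *ᵥ x) i) ^ 2 ≤ (M * ∑ j, |x j|) ^ 2 := h2
      _ = M ^ 2 * (∑ j, |x j|) ^ 2 := by ring
      _ ≤ M ^ 2 * ((l : ℝ) * (x ⬝ᵥ x)) := by
          rw [← h4]; exact mul_le_mul_of_nonneg_left (h4 ▸ h3) (by positivity)
  calc (D *ᵥ x) ⬝ᵥ (D *ᵥ x) = ∑ i, ((D *ᵥ x) i) ^ 2 := by simp [dotProduct, sq]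
    _ ≤ ∑ _i : Fin n, M ^ 2 * ((l : ℝ) * (x ⬝ᵥ x)) := Finset.sum_le_sum fun i _ => key i
    _ = (n : ℝ) * l * M ^ 2 * (x ⬝ᵥ x) := by
        rw [Finset.sum_const]; simp; ring

lemma keyDet {l : ℕ} (N : Matrix (Fin l) (Fin l) ℝ) (hN : N.PosSemidef)
    (K : Submodule ℝ (Fin l → ℝ)) (hK : 2 ≤ Module.finrank ℝ K) (ε c : ℝ)
    (hε : ∀ x ∈ K, x ⬝ᵥ (N *ᵥ x) ≤ ε * (x ⬝ᵥ x))
    (hc : ∀ x : Fin l → ℝ, x ⬝ᵥ (N *ᵥ x) ≤ c * (x ⬝ᵥ x)) :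
    N.det ≤ ε ^ 2 * c ^ (l - 2) := by
  have hH := hN.1
  set μ : Fin l → ℝ := hH.eigenvalues with hμ
  set U : Matrix (Fin l) (Fin l) ℝ := (hH.eigenvectorUnitary : Matrix (Fin l) (Fin l) ℝ) with hU
  have hUmem := (hH.eigenvectorUnitary).2
  have hU1 : U * star U = 1 := (Unitary.mem_iff.mp hUmem).2
  have hU2 : star U * U = 1 := (Unitary.mem_iff.mp hUmem).1
  have hstarU : star U = Uᵀ := by
    rw [Matrix.star_eq_conjTranspose, Matrix.conjTranspose_eq_transpose_of_trivial]
  have hspec : N = U * Matrix.diagonal μ * star U := by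
    have := hH.spectral_theorem
    simpa [hμ, hU] using this
  -- quadratic identities
  have hquad : ∀ x : Fin l → ℝ, x ⬝ᵥ (N *ᵥ x) = ∑ j, μ j * ((star U *ᵥ x) j) ^ 2 := by
    intro x
    have h1 : N *ᵥ x = U *ᵥ (Matrix.diagonal μ *ᵥ (star U *ᵥ x)) := by
      rw [hspec, ← Matrix.mulVec_mulVec, ← Matrix.mulVec_mulVec]
    rw [h1, Matrix.dotProduct_mulVec, hstarU, Matrix.mulVec_transpose]
    simp only [dotProduct, Matrix.mulVec_diagonal]
    exact Finset.sum_congr rfl fun j _ => by ring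
  have hnorm : ∀ x : Fin l → ℝ, x ⬝ᵥ x = ∑ j, ((star U *ᵥ x) j) ^ 2 := by
    intro x
    calc x ⬝ᵥ x = x ⬝ᵥ ((U * star U) *ᵥ x) := by rw [hU1, Matrix.one_mulVec]
      _ = (x ᵥ* U) ⬝ᵥ (star U *ᵥ x) := by rw [← Matrix.mulVec_mulVec, Matrix.dotProduct_mulVec]
      _ = (star U *ᵥ x) ⬝ᵥ (star U *ᵥ x) := by rw [hstarU, Matrix.mulVec_transpose]
      _ = ∑ j, ((star U *ᵥ x) j) ^ 2 := by
          simp only [dotProduct]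
          exact Finset.sum_congr rfl fun j _ => by ring
  -- eigenvalue facts
  have hμ0 : ∀ j, 0 ≤ μ j := hN.eigenvalues_nonneg
  have hμc : ∀ j, μ j ≤ c := by
    intro j
    have hx := hc (U *ᵥ Pi.single j 1)
    have hy : star U *ᵥ (U *ᵥ Pi.single j 1) = Pi.single j 1 := by
      rw [Matrix.mulVec_mulVec, hU2, Matrix.one_mulVec]
    rw [hquad, hnorm, hy] at hx
    simpa [Pi.single_apply, Finset.sum_ite_eq'] using hx
  -- l ≥ 2
  have hl2 : 2 ≤ l := by
    have := Submodule.finrank_le K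
    rw [Module.finrank_fin_fun] at this
    omega
  -- two small eigenvalues
  have htwo : ∃ i j : Fin l, i ≠ j ∧ μ i ≤ ε ∧ μ j ≤ ε := by
    by_contra hcon
    push_neg at hcon
    obtain ⟨i₀, hi₀⟩ : ∃ i₀ : Fin l, ∀ j, j ≠ i₀ → ε < μ j := by
      by_cases hex : ∃ i, μ i ≤ ε
      · obtain ⟨i₀, h0⟩ := hex
        exact ⟨i₀, fun j hj => hcon i₀ j (Ne.symm hj) h0⟩
      · push_neg at hex
        exact ⟨⟨0, by omega⟩, fun j _ => hex j⟩
    -- find nonzero z ∈ K orthogonal to the i₀-th eigenvector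
    set v0 : Fin l → ℝ := U *ᵥ Pi.single i₀ 1 with hv0
    let φ : K →ₗ[ℝ] ℝ :=
      { toFun := fun x => (x : Fin l → ℝ) ⬝ᵥ v0
        map_add' := fun x y => by simp [add_dotProduct]
        map_smul' := fun r x => by simp [smul_dotProduct] }
    have hker : LinearMap.ker φ ≠ ⊥ := by
      intro hbot
      have h1 := LinearMap.finrank_range_add_finrank_ker φ
      have h2 : Module.finrank ℝ (LinearMap.range φ) ≤ 1 := by
        simpa using Submodule.finrank_le (LinearMap.range φ)
      rw [hbot, finrank_bot] at h1
      omega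
    obtain ⟨x, hxker, hxne⟩ := Submodule.exists_mem_ne_zero_of_ne_bot hker
    set z : Fin l → ℝ := (x : Fin l → ℝ) with hz
    have hzK : z ∈ K := x.2
    have hzne : z ≠ 0 := by
      simpa [hz, Submodule.coe_eq_zero] using hxne
    have hzorth : z ⬝ᵥ v0 = 0 := hxker
    set y : Fin l → ℝ := star U *ᵥ z with hy
    have hyi₀ : y i₀ = 0 := by
      have : y i₀ = v0 ⬝ᵥ z := by
        simp only [hy, hv0, Matrix.mulVec, dotProduct, Matrix.star_apply, star_trivial,
          Pi.single_apply]
        simp [Finset.sum_ite_eq, mul_comm]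
      rw [this, dotProduct_comm, hzorth]
    have hyne : y ≠ 0 := by
      intro h0
      apply hzne
      have : U *ᵥ y = z := by
        rw [hy, Matrix.mulVec_mulVec, hU1, Matrix.one_mulVec]
      rw [← this, h0, Matrix.mulVec_zero]
    obtain ⟨j, hj⟩ := Function.ne_iff.mp hyne
    have hjne : j ≠ i₀ := fun hji => hj (hji ▸ hyi₀)
    have hle := hε z hzK
    rw [hquad, hnorm, ← hy] at hle
    have hsum : 0 < ∑ k, (μ k - ε) * (y k) ^ 2 := by
      refine Finset.sum_pos' (fun k _ => ?_) ⟨j, Finset.mem_univ j, ?_⟩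
      · rcases eq_or_ne k i₀ with rfl | hk
        · simp [hyi₀]
        · have := hi₀ k hk
          have := sq_nonneg (y k)
          nlinarith
      · have h1 := hi₀ j hjne
        have hyj : y j ≠ 0 := by simpa using hj
        have h2 : 0 < (y j) ^ 2 := by positivity
        nlinarith
    have heq : ∑ k, (μ k - ε) * (y k) ^ 2
        = (∑ k, μ k * (y k) ^ 2) - ∑ k, ε * (y k) ^ 2 := by
      rw [← Finset.sum_sub_distrib]
      exact Finset.sum_congr rfl fun k _ => by ring
    rw [Finset.mul_sum] at hle
    rw [heq] at hsum
    linarith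
  -- conclude
  obtain ⟨i0, i1, hne, h0, h1⟩ := htwo
  have hε0 : 0 ≤ ε := le_trans (hμ0 i0) h0
  have hc0 : 0 ≤ c := le_trans (hμ0 i0) (hμc i0)
  have hdet : N.det = ∏ j, μ j := by
    simpa using hH.det_eq_prod_eigenvalues
  have hi1mem : i1 ∈ Finset.univ.erase i0 := Finset.mem_erase.mpr ⟨Ne.symm hne, Finset.mem_univ _⟩
  have hsplit : ∏ j, μ j = μ i0 * (μ i1 * ∏ j ∈ (Finset.univ.erase i0).erase i1, μ j) := by
    rw [← Finset.mul_prod_erase _ μ (Finset.mem_univ i0), ← Finset.mul_prod_erase _ μ hi1mem]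
  have hcard : ((Finset.univ.erase i0).erase i1).card = l - 2 := by
    rw [Finset.card_erase_of_mem hi1mem, Finset.card_erase_of_mem (Finset.mem_univ i0)]
    simp only [Finset.card_univ, Fintype.card_fin]
    omega
  have hrest0 : 0 ≤ ∏ j ∈ (Finset.univ.erase i0).erase i1, μ j :=
    Finset.prod_nonneg fun j _ => hμ0 j
  have hrest : ∏ j ∈ (Finset.univ.erase i0).erase i1, μ j ≤ c ^ (l - 2) := by
    calc ∏ j ∈ (Finset.univ.erase i0).erase i1, μ j
        ≤ ∏ _j ∈ (Finset.univ.erase i0).erase i1, c :=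
          Finset.prod_le_prod (fun j _ => hμ0 j) (fun j _ => hμc j)
      _ = c ^ (l - 2) := by rw [Finset.prod_const, hcard]
  rw [hdet, hsplit]
  have step1 : μ i1 * ∏ j ∈ (Finset.univ.erase i0).erase i1, μ j ≤ ε * c ^ (l - 2) :=
    mul_le_mul h1 hrest hrest0 hε0
  have step2 : μ i0 * (μ i1 * ∏ j ∈ (Finset.univ.erase i0).erase i1, μ j)
      ≤ ε * (ε * c ^ (l - 2)) :=
    mul_le_mul h0 step1 (mul_nonneg (hμ0 i1) hrest0) hε0
  have : ε * (ε * c ^ (l - 2)) = ε ^ 2 * c ^ (l - 2) := by ring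
  linarith

theorem stmt12 (n l : ℕ) (hln : l ≤ n) (δ : ℝ) (hδ : 0 < δ)
    (A : ℝ → Matrix (Fin n) (Fin l) ℝ)
    (hA : ∀ i j, ContDiffOn ℝ 1 (fun t => A t i j) (Set.Icc 0 δ))
    (B : ℝ → Matrix (Fin l) (Fin l) ℝ) (hB : ∀ t, B t = (A t)ᵀ * A t)
    (h : ℝ) (hh : 0 < h)
    (hasym : (fun t => (B t).det - h ^ 2 * t ^ 2) =o[𝓝[>] (0 : ℝ)] fun t => t ^ 2) :
    Module.finrank ℝ (LinearMap.ker (Matrix.mulVecLin (B 0))) = 1 ∧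
    LinearMap.ker (Matrix.mulVecLin (B 0)) = LinearMap.ker (Matrix.mulVecLin (A 0)) := by
  classical
  -- positive semidefiniteness
  have hBt : ∀ t, (B t).PosSemidef := by
    intro t
    rw [hB]
    have := Matrix.posSemidef_conjTranspose_mul_self (A t)
    rwa [Matrix.conjTranspose_eq_transpose_of_trivial] at this
  -- kernel equality
  have kerEq : LinearMap.ker (Matrix.mulVecLin (B 0)) = LinearMap.ker (Matrix.mulVecLin (A 0)) := by
    ext v
    simp only [LinearMap.mem_ker, Matrix.mulVecLin_apply]
    rw [hB]
    constructor
    · intro hv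
      have h' : ((A 0)ᴴ * (A 0)) *ᵥ v = 0 := by
        rwa [Matrix.conjTranspose_eq_transpose_of_trivial]
      exact (Matrix.conjTranspose_mul_self_mulVec_eq_zero (A 0) v).mp h'
    · intro hv
      have h' := (Matrix.conjTranspose_mul_self_mulVec_eq_zero (A 0) v).mpr hv
      rwa [Matrix.conjTranspose_eq_transpose_of_trivial] at h'
  -- entry continuity
  have hAc : ∀ i j, ContinuousOn (fun t => A t i j) (Set.Icc 0 δ) :=
    fun i j => (hA i j).continuousOn
  -- uniform entry bound M
  have hMex : ∀ p : Fin n × Fin l, ∃ Mp, 0 ≤ Mp ∧ ∀ t ∈ Set.Icc 0 δ, |A t p.1 p.2| ≤ Mp := by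
    intro p
    obtain ⟨M0, hM0⟩ := isCompact_Icc.exists_bound_of_continuousOn (hAc p.1 p.2)
    exact ⟨max M0 0, le_max_right _ _,
      fun t ht => le_trans (by simpa using hM0 t ht) (le_max_left _ _)⟩
  choose Mf hMf0 hMf using hMex
  set M : ℝ := ∑ p : Fin n × Fin l, Mf p with hMdef
  have hM0 : 0 ≤ M := Finset.sum_nonneg fun p _ => hMf0 p
  have hMle : ∀ (i : Fin n) (j : Fin l), ∀ t ∈ Set.Icc 0 δ, |A t i j| ≤ M := fun i j t ht =>
    le_trans (hMf (i, j) t ht)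
      (Finset.single_le_sum (fun p _ => hMf0 p) (Finset.mem_univ (i, j)))
  -- Lipschitz bound C
  have hCex : ∀ p : Fin n × Fin l, ∃ Cp, 0 ≤ Cp ∧
      ∀ t ∈ Set.Icc 0 δ, |A t p.1 p.2 - A 0 p.1 p.2| ≤ Cp * t := by
    intro p
    have hud : UniqueDiffOn ℝ (Set.Icc (0:ℝ) δ) := uniqueDiffOn_Icc hδ
    have hf := hA p.1 p.2
    have hd : DifferentiableOn ℝ (fun t => A t p.1 p.2) (Set.Icc 0 δ) :=
      hf.differentiableOn one_ne_zero
    have hdc : ContinuousOn (derivWithin (fun t => A t p.1 p.2) (Set.Icc 0 δ)) (Set.Icc 0 δ) :=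
      hf.continuousOn_derivWithin hud le_rfl
    obtain ⟨C0, hC0⟩ := isCompact_Icc.exists_bound_of_continuousOn hdc
    refine ⟨max C0 0, le_max_right _ _, fun t ht => ?_⟩
    have h0mem : (0:ℝ) ∈ Set.Icc 0 δ := ⟨le_rfl, hδ.le⟩
    have := Convex.norm_image_sub_le_of_norm_derivWithin_le (C := max C0 0) hd
      (fun x hx => le_trans (hC0 x hx) (le_max_left C0 0)) (convex_Icc _ _) h0mem ht
    simpa [Real.norm_eq_abs, abs_of_nonneg ht.1] using this
  choose Cf hCf0 hCf using hCex
  set C : ℝ := ∑ p : Fin n × Fin l, Cf p with hCdef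
  have hC0 : 0 ≤ C := Finset.sum_nonneg fun p _ => hCf0 p
  have hCle : ∀ (i : Fin n) (j : Fin l), ∀ t ∈ Set.Icc 0 δ, |A t i j - A 0 i j| ≤ C * t := by
    intro i j t ht
    refine le_trans (hCf (i, j) t ht) (mul_le_mul_of_nonneg_right ?_ ht.1)
    exact Finset.single_le_sum (fun p _ => hCf0 p) (Finset.mem_univ (i, j))
  -- continuity of det ∘ B
  have hBmat : ContinuousOn B (Set.Icc 0 δ) := by
    apply continuousOn_pi.2
    intro i
    apply continuousOn_pi.2
    intro j
    have : (fun t => B t i j) = fun t => ∑ k, A t k i * A t k j := by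
      funext t
      rw [hB]
      simp [Matrix.mul_apply, Matrix.transpose_apply]
    rw [this]
    exact continuousOn_finset_sum _ fun k _ => (hAc k i).mul (hAc k j)
  have hBcont : ContinuousOn (fun t => (B t).det) (Set.Icc 0 δ) :=
    (Continuous.matrix_det continuous_id).comp_continuousOn hBmat
  -- limits
  have htsq : Tendsto (fun t : ℝ => t ^ 2) (𝓝[>] 0) (𝓝 0) := by
    have h1 : Tendsto (fun t : ℝ => t ^ 2) (𝓝 0) (𝓝 0) := by
      simpa using (continuous_pow 2).tendsto (0:ℝ)
    exact h1.mono_left nhdsWithin_le_nhds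
  have hdetB0 : (B 0).det = 0 := by
    have h0mem : (0:ℝ) ∈ Set.Icc 0 δ := ⟨le_rfl, hδ.le⟩
    have ht1 : Tendsto (fun t => (B t).det) (𝓝[Set.Icc 0 δ] 0) (𝓝 ((B 0).det)) :=
      hBcont 0 h0mem
    have hsub : 𝓝[>] (0:ℝ) ≤ 𝓝[Set.Icc 0 δ] 0 := by
      rw [← nhdsWithin_Ioo_eq_nhdsGT hδ]
      exact nhdsWithin_mono _ Set.Ioo_subset_Icc_self
    have ht2 : Tendsto (fun t => (B t).det) (𝓝[>] 0) (𝓝 ((B 0).det)) := ht1.mono_left hsub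
    have ht3 : Tendsto (fun t => (B t).det - h ^ 2 * t ^ 2) (𝓝[>] (0:ℝ)) (𝓝 0) :=
      hasym.isBigO.trans_tendsto htsq
    have ht4 : Tendsto (fun t => (B t).det) (𝓝[>] (0:ℝ)) (𝓝 0) := by
      have := ht3.add (htsq.const_mul (h ^ 2))
      simpa using this
    exact tendsto_nhds_unique ht2 ht4
  -- kernel nontrivial
  have h1le : 1 ≤ Module.finrank ℝ (LinearMap.ker (Matrix.mulVecLin (B 0))) := by
    obtain ⟨v, hv0, hv⟩ := (Matrix.exists_mulVec_eq_zero_iff).mpr hdetB0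
    rw [Nat.one_le_iff_ne_zero]
    intro hzero
    have hbot : LinearMap.ker (Matrix.mulVecLin (B 0)) = ⊥ := Submodule.finrank_eq_zero.mp hzero
    have hmem : v ∈ LinearMap.ker (Matrix.mulVecLin (B 0)) := by
      simp [LinearMap.mem_ker, Matrix.mulVecLin_apply, hv]
    rw [hbot, Submodule.mem_bot] at hmem
    exact hv0 hmem
  -- kernel at most 1-dimensional
  have hnot2 : ¬ 2 ≤ Module.finrank ℝ (LinearMap.ker (Matrix.mulVecLin (B 0))) := by
    intro hge2
    rw [kerEq] at hge2
    set K := LinearMap.ker (Matrix.mulVecLin (A 0)) with hK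
    -- determinant upper bound
    have hub : ∀ t ∈ Set.Icc 0 δ,
        (B t).det ≤ ((n:ℝ) * l * (C * t) ^ 2) ^ 2 * ((n:ℝ) * l * M ^ 2) ^ (l - 2) := by
      intro t ht
      apply keyDet (B t) (hBt t) K hge2
      · intro x hx
        have hx0 : (A 0) *ᵥ x = 0 := by
          simpa [hK, Matrix.mulVecLin_apply] using hx
        have hQ : x ⬝ᵥ ((B t) *ᵥ x) = ((A t - A 0) *ᵥ x) ⬝ᵥ ((A t - A 0) *ᵥ x) := by
          rw [hB, quadId]
          rw [Matrix.sub_mulVec, hx0, sub_zero]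
        rw [hQ]
        exact dotBound _ (C * t) (mul_nonneg hC0 ht.1)
          (fun i j => by simpa [Matrix.sub_apply] using hCle i j t ht) x
      · intro x
        rw [hB, quadId]
        exact dotBound _ M hM0 (fun i j => hMle i j t ht) x
    -- big-O bound and contradiction
    set c1 : ℝ := ((n:ℝ) * l * C ^ 2) ^ 2 * ((n:ℝ) * l * M ^ 2) ^ (l - 2) with hc1
    have hbigO : (fun t => (B t).det) =O[𝓝[>] (0:ℝ)] fun t => t ^ 4 := by
      apply IsBigO.of_bound c1
      filter_upwards [Ioo_mem_nhdsGT_of_mem (Set.left_mem_Ico.mpr hδ)] with t ht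
      have hub_t := hub t (Set.Ioo_subset_Icc_self ht)
      have hdet0 : 0 ≤ (B t).det := by
        have hd := (hBt t).1.det_eq_prod_eigenvalues
        have : (B t).det = ∏ i, (hBt t).1.eigenvalues i := by simpa using hd
        rw [this]
        exact Finset.prod_nonneg fun i _ => (hBt t).eigenvalues_nonneg i
      rw [Real.norm_eq_abs, Real.norm_eq_abs, abs_of_nonneg hdet0,
        abs_of_nonneg (pow_nonneg ht.1.le 4)]
      calc (B t).det ≤ ((n:ℝ) * l * (C * t) ^ 2) ^ 2 * ((n:ℝ) * l * M ^ 2) ^ (l - 2) := hub_t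
        _ = c1 * t ^ 4 := by rw [hc1]; ring
    have ht4o : (fun t : ℝ => t ^ 4) =o[𝓝[>] (0:ℝ)] fun t => t ^ 2 := by
      have h1 : (fun t : ℝ => t ^ 2) =o[𝓝[>] (0:ℝ)] fun _ => (1:ℝ) := by
        rw [isLittleO_one_iff]
        exact htsq
      have h2 := h1.mul_isBigO (isBigO_refl (fun t : ℝ => t ^ 2) (𝓝[>] (0:ℝ)))
      have heq : (fun t : ℝ => t ^ 4) = fun t : ℝ => t ^ 2 * t ^ 2 := by funext t; ring
      rw [heq]
      simpa using h2
    have hdet_o : (fun t => (B t).det) =o[𝓝[>] (0:ℝ)] fun t => t ^ 2 :=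
      hbigO.trans_isLittleO ht4o
    have hsq_o : (fun t : ℝ => h ^ 2 * t ^ 2) =o[𝓝[>] (0:ℝ)] fun t => t ^ 2 := by
      have hd := hdet_o.sub hasym
      simpa using hd
    have hev := hsq_o.def (show (0:ℝ) < h ^ 2 / 2 by positivity)
    have hev2 := hev.and (Ioo_mem_nhdsGT_of_mem (Set.left_mem_Ico.mpr hδ))
    obtain ⟨t, ht1, ht2⟩ := hev2.exists
    have htpos : 0 < t := ht2.1
    rw [Real.norm_eq_abs, Real.norm_eq_abs, abs_of_nonneg (by positivity : (0:ℝ) ≤ h ^ 2 * t ^ 2),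
      abs_of_nonneg (by positivity : (0:ℝ) ≤ t ^ 2)] at ht1
    nlinarith [sq_nonneg t, sq_nonneg h, mul_pos (mul_pos hh hh) (mul_pos htpos htpos)]
  exact ⟨by omega, kerEq⟩
end

section
/- Let A(t) be an n×n real matrix function of class C¹ on [0,1] with det A(t) > 0 for t ∈ (0,1), det A(0) = det A(1) = 0, and suppose there exist h₀ > 0, h₁ > 0 and positive integers ν₀, ν₁ such that det A(t) = h₀ t^{ν₀} + o(t^{ν₀}) as t → 0+ and det A(1−t) = h₁ t^{ν₁} + o(t^{ν₁}) as t → 0+. Let ν = max(ν₀, ν₁). Then there exist M > 0 and δ ∈ (0,1) such that for every c ∈ (0,δ): min_{t∈[c,1−c]} det A(t) ≥ M c^ν. -/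
open Set Filter Asymptotics Topology

theorem stmt17 (n : ℕ) (A : ℝ → Matrix (Fin n) (Fin n) ℝ)
    (hA : ∀ i j, ContDiffOn ℝ 1 (fun t => A t i j) (Set.Icc 0 1))
    (hpos : ∀ t ∈ Set.Ioo (0 : ℝ) 1, 0 < (A t).det)
    (hdet0 : (A 0).det = 0) (hdet1 : (A 1).det = 0)
    (h₀ h₁ : ℝ) (hh₀ : 0 < h₀) (hh₁ : 0 < h₁)
    (ν₀ ν₁ : ℕ) (hν₀ : 0 < ν₀) (hν₁ : 0 < ν₁)
    (hasym₀ : (fun t => (A t).det - h₀ * t ^ ν₀) =o[𝓝[>] (0 : ℝ)] fun t => t ^ ν₀)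
    (hasym₁ : (fun t => (A (1 - t)).det - h₁ * t ^ ν₁) =o[𝓝[>] (0 : ℝ)] fun t => t ^ ν₁) :
    ∃ M > 0, ∃ δ : ℝ, 0 < δ ∧ δ < 1 ∧
      ∀ c : ℝ, 0 < c → c < δ → ∀ t ∈ Set.Icc c (1 - c),
        (A t).det ≥ M * c ^ max ν₀ ν₁ := by
  set f : ℝ → ℝ := fun t => (A t).det with hfdef
  -- continuity of det A on [0,1]
  have hcont : ContinuousOn f (Set.Icc 0 1) := by
    have hAc : ContinuousOn A (Set.Icc 0 1) := by
      refine continuousOn_pi.mpr ?_; intro i; rw [continuousOn_pi]; intro j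
      exact (hA i j).continuousOn
    exact (continuous_id.matrix_det).comp_continuousOn hAc
  -- lower bound near 0
  have h0 : ∃ u : ℝ, 0 < u ∧ ∀ t : ℝ, 0 < t → t < u → h₀ / 2 * t ^ ν₀ ≤ f t := by
    have hev := hasym₀.def (by positivity : (0:ℝ) < h₀ / 2)
    rw [eventually_iff, mem_nhdsGT_iff_exists_Ioo_subset] at hev
    obtain ⟨u, hu, hsub⟩ := hev
    refine ⟨u, hu, fun t ht htu => ?_⟩
    have := hsub ⟨ht, htu⟩
    simp only [Set.mem_setOf_eq, Real.norm_eq_abs] at this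
    have htν : |t ^ ν₀| = t ^ ν₀ := abs_of_nonneg (by positivity)
    rw [htν] at this
    have := abs_le.mp this
    nlinarith [this.1, pow_pos ht ν₀]
  -- lower bound near 1
  have h1 : ∃ u : ℝ, 0 < u ∧ ∀ s : ℝ, 0 < s → s < u → h₁ / 2 * s ^ ν₁ ≤ f (1 - s) := by
    have hev := hasym₁.def (by positivity : (0:ℝ) < h₁ / 2)
    rw [eventually_iff, mem_nhdsGT_iff_exists_Ioo_subset] at hev
    obtain ⟨u, hu, hsub⟩ := hev
    refine ⟨u, hu, fun s hs hsu => ?_⟩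
    have := hsub ⟨hs, hsu⟩
    simp only [Set.mem_setOf_eq, Real.norm_eq_abs] at this
    have hsν : |s ^ ν₁| = s ^ ν₁ := abs_of_nonneg (by positivity)
    rw [hsν] at this
    have := abs_le.mp this
    nlinarith [this.1, pow_pos hs ν₁]
  obtain ⟨u₀, hu₀, hb₀⟩ := h0
  obtain ⟨u₁, hu₁, hb₁⟩ := h1
  set δ₀ : ℝ := min u₀ (1/4) with hδ₀def
  set δ₁ : ℝ := min u₁ (1/4) with hδ₁def
  have hδ₀pos : 0 < δ₀ := lt_min hu₀ (by norm_num)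
  have hδ₁pos : 0 < δ₁ := lt_min hu₁ (by norm_num)
  have hδ₀le : δ₀ ≤ 1/4 := min_le_right _ _
  have hδ₁le : δ₁ ≤ 1/4 := min_le_right _ _
  -- middle compact interval
  have hSsub : Set.Icc δ₀ (1 - δ₁) ⊆ Set.Icc 0 1 := by
    intro x hx
    exact ⟨le_trans hδ₀pos.le hx.1, le_trans hx.2 (by linarith)⟩
  have hSne : (Set.Icc δ₀ (1 - δ₁)).Nonempty := ⟨δ₀, le_refl _, by linarith⟩
  obtain ⟨x, hxS, hxmin⟩ := (isCompact_Icc).exists_isMinOn hSne (hcont.mono hSsub)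
  have hxpos : 0 < f x := hpos x ⟨lt_of_lt_of_le hδ₀pos hxS.1, lt_of_le_of_lt hxS.2 (by linarith)⟩
  refine ⟨min (min (h₀/2) (h₁/2)) (f x), by positivity, min δ₀ δ₁, lt_min hδ₀pos hδ₁pos,
    lt_of_le_of_lt (min_le_left _ _) (by linarith), fun c hc hcδ t ht => ?_⟩
  set M := min (min (h₀/2) (h₁/2)) (f x) with hMdef
  have hMpos : 0 < M := by positivity
  have hc1 : c ≤ 1 := by
    have : c < δ₀ := lt_of_lt_of_le hcδ (min_le_left _ _)
    linarith
  have hct : c ≤ t := ht.1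
  have ht1c : t ≤ 1 - c := ht.2
  have htpos : 0 < t := lt_of_lt_of_le hc hct
  have hcν : c ^ max ν₀ ν₁ ≤ 1 := pow_le_one₀ hc.le hc1
  have hcνpos : 0 < c ^ max ν₀ ν₁ := pow_pos hc _
  by_cases ht0 : t < δ₀
  · -- near 0
    have hbound := hb₀ t htpos (lt_of_lt_of_le ht0 (min_le_left _ _))
    have h1' : c ^ max ν₀ ν₁ ≤ c ^ ν₀ := pow_le_pow_of_le_one hc.le hc1 (le_max_left _ _)
    have h2' : c ^ ν₀ ≤ t ^ ν₀ := pow_le_pow_left₀ hc.le hct _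
    have hM₀ : M ≤ h₀/2 := le_trans (min_le_left _ _) (min_le_left _ _)
    calc M * c ^ max ν₀ ν₁ ≤ (h₀/2) * c ^ max ν₀ ν₁ :=
          mul_le_mul_of_nonneg_right hM₀ hcνpos.le
      _ ≤ (h₀/2) * t ^ ν₀ := by
          apply mul_le_mul_of_nonneg_left (le_trans h1' h2') (by positivity)
      _ ≤ f t := hbound
  · by_cases ht1 : 1 - t < δ₁
    · -- near 1
      have hspos : 0 < 1 - t := by linarith
      have hbound := hb₁ (1 - t) hspos (lt_of_lt_of_le ht1 (min_le_left _ _))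
      rw [sub_sub_cancel] at hbound
      have hcs : c ≤ 1 - t := by linarith
      have h1' : c ^ max ν₀ ν₁ ≤ c ^ ν₁ := pow_le_pow_of_le_one hc.le hc1 (le_max_right _ _)
      have h2' : c ^ ν₁ ≤ (1 - t) ^ ν₁ := pow_le_pow_left₀ hc.le hcs _
      have hM₁ : M ≤ h₁/2 := le_trans (min_le_left _ _) (min_le_right _ _)
      calc M * c ^ max ν₀ ν₁ ≤ (h₁/2) * c ^ max ν₀ ν₁ :=
            mul_le_mul_of_nonneg_right hM₁ hcνpos.le
        _ ≤ (h₁/2) * (1 - t) ^ ν₁ := by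
            apply mul_le_mul_of_nonneg_left (le_trans h1' h2') (by positivity)
        _ ≤ f t := hbound
    · -- middle
      have hmem : t ∈ Set.Icc δ₀ (1 - δ₁) := ⟨not_lt.mp ht0, by linarith [not_lt.mp ht1]⟩
      have hMx : M ≤ f x := min_le_right _ _
      calc M * c ^ max ν₀ ν₁ ≤ M * 1 := mul_le_mul_of_nonneg_left hcν hMpos.le
        _ = M := mul_one _
        _ ≤ f x := hMx
        _ ≤ f t := hxmin hmem
end
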